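/- Let A be a unital C*-algebra and let u be a unitary in A with ‖u − 1‖ < 1. Then for every a in A and every s in [0,1], the unitary exp(s·log u) (defined via the holomorphic functional calculus, with log the principal branch) satisfies ‖[exp(s·log u), a]‖ ≤ ‖[u, a]‖ / (1 − ‖u − 1‖). -/

import Mathlib

/-- Let `A` be a unital C*-algebra and `u` a unitary with `‖u - 1‖ < 1`.
For `s ∈ [0,1]`, let `v = exp(s·log u)` be defined by the power series `f(u-1)` where
`f(t) = exp(s·log(1+t)) = (1+t)^s`, whose Taylor coefficients at `0` are
`(∏_{i<n} (s-i)) / n!`.  Then `‖[v, a]‖ ≤ ‖[u, a]‖ / (1 - ‖u - 1‖)` for every `a ∈ A`. -/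
theorem stmt0 (A : Type*) [CStarAlgebra A] [NormedAlgebra ℂ A]
    (u : A) (hu : u ∈ unitary A) (hu1 : ‖u - 1‖ < 1)
    (s : ℝ) (hs : s ∈ Set.Icc (0 : ℝ) 1)
    (v : A)
    (hv : v = ∑' n : ℕ,
      (((∏ i ∈ Finset.range n, (s - (i : ℝ))) / (n.factorial : ℝ) : ℝ) : ℂ) • (u - 1) ^ n)
    (a : A) :
    ‖v * a - a * v‖ ≤ ‖u * a - a * u‖ / (1 - ‖u - 1‖) := by
  letI : NormedSpace ℂ A := ‹NormedAlgebra ℂ A›.toNormedSpace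
  obtain ⟨hs0, hs1⟩ := hs
  set t : A := u - 1 with ht
  set x : ℝ := ‖t‖ with hx
  have hx0 : 0 ≤ x := norm_nonneg _
  set D : ℝ := ‖u * a - a * u‖ with hD
  have hD0 : 0 ≤ D := norm_nonneg _
  have hta : t * a - a * t = u * a - a * u := by rw [ht]; noncomm_ring
  set c : ℕ → ℝ := fun n => (∏ i ∈ Finset.range n, (s - (i : ℝ))) / n.factorial with hc
  -- bound on the numerator product
  have hprod : ∀ n : ℕ, |∏ i ∈ Finset.range (n + 1), (s - (i : ℝ))| ≤ n.factorial := by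
    intro n
    induction n with
    | zero => simpa using abs_le.mpr ⟨by linarith, by linarith⟩
    | succ n ih =>
      rw [Finset.prod_range_succ, abs_mul]
      have h1 : |s - ((n + 1 : ℕ) : ℝ)| ≤ (n + 1 : ℕ) := by
        have : ((n + 1 : ℕ) : ℝ) ≥ 1 := by exact_mod_cast Nat.one_le_iff_ne_zero.mpr (by omega)
        rw [abs_le]
        constructor <;> push_cast <;> linarith
      calc |∏ i ∈ Finset.range (n + 1), (s - (i : ℝ))| * |s - ((n + 1 : ℕ) : ℝ)|
          ≤ (n.factorial : ℝ) * ((n + 1 : ℕ) : ℝ) := by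
            apply mul_le_mul ih h1 (abs_nonneg _) (by positivity)
        _ = ((n + 1).factorial : ℝ) := by
            rw [Nat.factorial_succ]; push_cast; ring
  -- coefficient bound : (n+1) * |c (n+1)| ≤ 1
  have hcb : ∀ n : ℕ, ((n + 1 : ℕ) : ℝ) * |c (n + 1)| ≤ 1 := by
    intro n
    have hfac : (0 : ℝ) < ((n + 1).factorial : ℝ) := by exact_mod_cast (n + 1).factorial_pos
    have : |c (n + 1)| ≤ (n.factorial : ℝ) / ((n + 1).factorial : ℝ) := by
      rw [hc]
      simp only [abs_div, abs_of_pos hfac]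
      gcongr
      · exact hprod n
    have h2 : ((n + 1 : ℕ) : ℝ) * ((n.factorial : ℝ) / ((n + 1).factorial : ℝ)) = 1 := by
      rw [Nat.factorial_succ]; push_cast; field_simp
    calc ((n + 1 : ℕ) : ℝ) * |c (n + 1)|
        ≤ ((n + 1 : ℕ) : ℝ) * ((n.factorial : ℝ) / ((n + 1).factorial : ℝ)) := by
          apply mul_le_mul_of_nonneg_left this (by positivity)
      _ = 1 := h2
  have hcle : ∀ n : ℕ, |c n| ≤ 1 := by
    intro n
    cases n with
    | zero => simp [hc]
    | succ n =>
      have := hcb n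
      have hn1 : (1 : ℝ) ≤ ((n + 1 : ℕ) : ℝ) := by exact_mod_cast Nat.one_le_iff_ne_zero.mpr (by omega)
      nlinarith [abs_nonneg (c (n + 1))]
  -- commutator norm bound for powers
  have hcomm : ∀ n : ℕ, ‖t ^ (n + 1) * a - a * t ^ (n + 1)‖ ≤ ((n + 1 : ℕ) : ℝ) * x ^ n * D := by
    intro n
    induction n with
    | zero => simp [hta, hD]
    | succ n ih =>
      have key : t ^ (n + 2) * a - a * t ^ (n + 2)
          = t ^ (n + 1) * (t * a - a * t) + (t ^ (n + 1) * a - a * t ^ (n + 1)) * t := by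
        have : t ^ (n + 2) = t ^ (n + 1) * t := by rw [← pow_succ]
        rw [this]; noncomm_ring
      have htn : ‖t ^ (n + 1)‖ ≤ x ^ (n + 1) := norm_pow_le' t (Nat.succ_pos n)
      calc ‖t ^ (n + 2) * a - a * t ^ (n + 2)‖
          ≤ ‖t ^ (n + 1) * (t * a - a * t)‖ + ‖(t ^ (n + 1) * a - a * t ^ (n + 1)) * t‖ := by
            rw [key]; exact norm_add_le _ _
        _ ≤ ‖t ^ (n + 1)‖ * ‖t * a - a * t‖ + ‖t ^ (n + 1) * a - a * t ^ (n + 1)‖ * x := by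
            gcongr <;> [exact norm_mul_le _ _; exact norm_mul_le _ _]
        _ ≤ x ^ (n + 1) * D + (((n + 1 : ℕ) : ℝ) * x ^ n * D) * x := by
            gcongr
            · rw [hta]
        _ = ((n + 2 : ℕ) : ℝ) * x ^ (n + 1) * D := by push_cast; ring
  -- the series defining v
  set h : ℕ → A := fun n => ((c n : ℂ)) • t ^ n with hh
  have hsum : Summable h := by
    rw [← summable_nat_add_iff 1]
    apply Summable.of_norm_bounded (g := fun n => x ^ (n + 1))
      (((summable_geometric_of_lt_one hx0 hu1).mul_left x).congr (fun n => by rw [← pow_succ']))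
    intro n
    rw [hh]
    calc ‖(c (n + 1) : ℂ) • t ^ (n + 1)‖ = |c (n + 1)| * ‖t ^ (n + 1)‖ := by
          rw [norm_smul, Complex.norm_real, Real.norm_eq_abs]
      _ ≤ 1 * x ^ (n + 1) := by
          apply mul_le_mul (hcle _) (norm_pow_le' t (Nat.succ_pos n)) (norm_nonneg _) zero_le_one
      _ = x ^ (n + 1) := one_mul _
  -- apply the continuous linear map b ↦ b * a - a * b
  set L : A →L[ℂ] A := (ContinuousLinearMap.mul ℂ A).flip a - ContinuousLinearMap.mul ℂ A a
    with hL
  have hLapp : ∀ b : A, L b = b * a - a * b := by intro b; simp [hL]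
  have hveq : v * a - a * v = ∑' n : ℕ, (c n : ℂ) • (t ^ n * a - a * t ^ n) := by
    rw [← hLapp v, hv, L.map_tsum hsum]
    congr 1
    funext n
    simp only [hh, map_smul, hLapp, smul_mul_assoc, mul_smul_comm, smul_sub]
  -- the dominating series
  set g : ℕ → ℝ := fun n => if n = 0 then 0 else D * x ^ (n - 1) with hg
  have hgsum : HasSum g (D / (1 - x)) := by
    have h1 : HasSum (fun n : ℕ => g (n + 1)) (D * (1 - x)⁻¹) := by
      have := (hasSum_geometric_of_lt_one hx0 hu1).mul_left D
      exact this.congr (fun n => by simp [hg])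
    rw [hasSum_nat_add_iff 1] at h1
    simpa [hg, div_eq_mul_inv] using h1
  rw [hveq]
  apply tsum_of_norm_bounded hgsum
  intro n
  cases n with
  | zero => simp [hg]
  | succ n =>
    have : ‖(c (n + 1) : ℂ) • (t ^ (n + 1) * a - a * t ^ (n + 1))‖
        = |c (n + 1)| * ‖t ^ (n + 1) * a - a * t ^ (n + 1)‖ := by
      rw [norm_smul, Complex.norm_real, Real.norm_eq_abs]
    rw [this]
    have hb : |c (n + 1)| * ‖t ^ (n + 1) * a - a * t ^ (n + 1)‖
        ≤ |c (n + 1)| * (((n + 1 : ℕ) : ℝ) * x ^ n * D) :=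
      mul_le_mul_of_nonneg_left (hcomm n) (abs_nonneg _)
    have hb2 : |c (n + 1)| * (((n + 1 : ℕ) : ℝ) * x ^ n * D) ≤ 1 * (x ^ n * D) := by
      have := hcb n
      have hxD : (0 : ℝ) ≤ x ^ n * D := by positivity
      calc |c (n + 1)| * (((n + 1 : ℕ) : ℝ) * x ^ n * D)
          = (((n + 1 : ℕ) : ℝ) * |c (n + 1)|) * (x ^ n * D) := by ring
        _ ≤ 1 * (x ^ n * D) := mul_le_mul_of_nonneg_right this hxD
    have : g (n + 1) = D * x ^ n := by simp [hg]
    rw [this]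
    calc |c (n + 1)| * ‖t ^ (n + 1) * a - a * t ^ (n + 1)‖
        ≤ 1 * (x ^ n * D) := le_trans hb hb2
      _ = D * x ^ n := by ring
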